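/- Let A be a nontrivial unital complex Banach algebra (with ‖1‖ = 1, 1 ≠ 0). Then there exist no elements a, b ∈ A with a·b − b·a = 1. -/

import Mathlib

/-- Wintner–Wielandt: in a nontrivial unital complex Banach algebra, the identity is not a
commutator: there are no `a, b` with `a*b - b*a = 1`. -/
theorem no_commutator_eq_one
    {A : Type*} [NormedRing A] [NormOneClass A] [NormedAlgebra ℂ A]
    [CompleteSpace A] [Nontrivial A] :
    ¬ ∃ a b : A, a * b - b * a = 1 := by
  rintro ⟨a, b, h⟩
  -- key identity: a * b^(n+1) - b^(n+1) * a = (n+1) • b^n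
  have key : ∀ n : ℕ, a * b ^ (n + 1) - b ^ (n + 1) * a = ((n : ℂ) + 1) • b ^ n := by
    intro n
    induction n with
    | zero => simpa using h
    | succ n ih =>
      have : a * b ^ (n + 2) - b ^ (n + 2) * a
          = (a * b ^ (n + 1) - b ^ (n + 1) * a) * b + b ^ (n + 1) * (a * b - b * a) := by
        rw [pow_succ b (n+1)]; noncomm_ring
      rw [this, ih, h, mul_one, smul_mul_assoc, ← pow_succ]
      push_cast
      module
  -- every power of b is nonzero
  have nonzero : ∀ n : ℕ, b ^ n ≠ 0 := by
    intro n
    induction n with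
    | zero => simp
    | succ n ih =>
      intro hz
      apply ih
      have := key n
      rw [hz, mul_zero, zero_mul, sub_zero] at this
      have hne : ((n : ℂ) + 1) ≠ 0 := Nat.cast_add_one_ne_zero n
      exact (smul_eq_zero.mp this.symm).resolve_left hne
  -- norm estimate forces b^n = 0 for large n
  obtain ⟨N, hN⟩ := exists_nat_gt (2 * ‖a‖ * ‖b‖)
  have hb : ‖b ^ N‖ ≠ 0 := norm_ne_zero_iff.mpr (nonzero N)
  have hbound : ((N : ℝ) + 1) * ‖b ^ N‖ ≤ 2 * ‖a‖ * ‖b‖ * ‖b ^ N‖ := by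
    have h1 : ‖((N : ℂ) + 1) • b ^ N‖ = ((N : ℝ) + 1) * ‖b ^ N‖ := by
      rw [norm_smul]
      congr 1
      have : ((N : ℂ) + 1) = ((N + 1 : ℕ) : ℂ) := by push_cast; ring
      rw [this, Complex.norm_natCast]; push_cast; ring
    calc ((N : ℝ) + 1) * ‖b ^ N‖ = ‖a * b ^ (N + 1) - b ^ (N + 1) * a‖ := by
          rw [key N, h1]
      _ ≤ ‖a * b ^ (N + 1)‖ + ‖b ^ (N + 1) * a‖ := norm_sub_le _ _
      _ ≤ ‖a‖ * ‖b ^ (N + 1)‖ + ‖b ^ (N + 1)‖ * ‖a‖ := by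
          gcongr <;> exact norm_mul_le _ _
      _ = 2 * ‖a‖ * ‖b ^ (N + 1)‖ := by ring
      _ ≤ 2 * ‖a‖ * (‖b ^ N‖ * ‖b‖) := by
          gcongr
          rw [pow_succ]; exact norm_mul_le _ _
      _ = 2 * ‖a‖ * ‖b‖ * ‖b ^ N‖ := by ring
  have hpos : 0 < ‖b ^ N‖ := lt_of_le_of_ne (norm_nonneg _) (Ne.symm hb)
  have := (mul_le_mul_iff_of_pos_right hpos).mp hbound
  linarith
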